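/- For a densely defined symmetric positive-definite operator T₀ (⟨T₀u,u⟩ ≥ ‖u‖² for u ∈ D(T₀)) on a real Hilbert space H, the Friedrichs extension S: D(S) ⊆ H → H is a self-adjoint bijective extension of T₀. -/

import Mathlib

set_option linter.unusedSectionVars false

open scoped RealInnerProductSpace
open UniformSpace

namespace FriedrichsAux

variable {H : Type*} [NormedAddCommGroup H] [InnerProductSpace ℝ H] [CompleteSpace H]

/-- Type synonym for the domain of `T₀` carrying the form inner product. -/
def FormDom (T₀ : H →ₗ.[ℝ] H)
    (_hs : ∀ u v : T₀.domain, ⟪T₀ u, (v : H)⟫ = ⟪(u : H), T₀ v⟫)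
    (_hp : ∀ u : T₀.domain, ‖(u : H)‖ ^ 2 ≤ ⟪T₀ u, (u : H)⟫) : Type _ :=
  T₀.domain

variable {T₀ : H →ₗ.[ℝ] H}
  (hs : ∀ u v : T₀.domain, ⟪T₀ u, (v : H)⟫ = ⟪(u : H), T₀ v⟫)
  (hp : ∀ u : T₀.domain, ‖(u : H)‖ ^ 2 ≤ ⟪T₀ u, (u : H)⟫)

instance : AddCommGroup (FormDom T₀ hs hp) := inferInstanceAs (AddCommGroup T₀.domain)
instance : Module ℝ (FormDom T₀ hs hp) := inferInstanceAs (Module ℝ T₀.domain)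

/-- Identity map to the subtype. -/
def toSub (u : FormDom T₀ hs hp) : T₀.domain := u

/-- Identity map from the subtype. -/
def ofSub (u : T₀.domain) : FormDom T₀ hs hp := u

theorem toSub_add (u v : FormDom T₀ hs hp) :
    toSub hs hp (u + v) = toSub hs hp u + toSub hs hp v := rfl

theorem toSub_smul (r : ℝ) (u : FormDom T₀ hs hp) :
    toSub hs hp (r • u) = r • toSub hs hp u := rfl

theorem toSub_ofSub (u : T₀.domain) : toSub hs hp (ofSub hs hp u) = u := rfl

noncomputable instance formCore : InnerProductSpace.Core ℝ (FormDom T₀ hs hp) where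
  inner u v := ⟪T₀ (toSub hs hp u), ((toSub hs hp v : T₀.domain) : H)⟫
  conj_inner_symm u v := by
    simp only [conj_trivial]
    rw [hs (toSub hs hp v) (toSub hs hp u), real_inner_comm]
  re_inner_nonneg u := by
    simpa using le_trans (sq_nonneg ‖((toSub hs hp u : T₀.domain) : H)‖) (hp (toSub hs hp u))
  add_left u v w := by
    show ⟪T₀ (toSub hs hp (u + v)), ((toSub hs hp w : T₀.domain) : H)⟫ =
      ⟪T₀ (toSub hs hp u), ((toSub hs hp w : T₀.domain) : H)⟫ +
      ⟪T₀ (toSub hs hp v), ((toSub hs hp w : T₀.domain) : H)⟫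
    rw [toSub_add, LinearPMap.map_add, inner_add_left]
  smul_left u v r := by
    show ⟪T₀ (toSub hs hp (r • u)), ((toSub hs hp v : T₀.domain) : H)⟫ =
      (starRingEnd ℝ) r * ⟪T₀ (toSub hs hp u), ((toSub hs hp v : T₀.domain) : H)⟫
    rw [toSub_smul, LinearPMap.map_smul, real_inner_smul_left, conj_trivial]
  definite u hu := by
    have h1 : ‖((toSub hs hp u : T₀.domain) : H)‖ ^ 2 ≤ 0 := hu ▸ hp (toSub hs hp u)
    have h2 : ((toSub hs hp u : T₀.domain) : H) = 0 := by
      have := le_antisymm h1 (sq_nonneg _)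
      simpa [pow_eq_zero_iff] using this
    exact Subtype.ext h2

noncomputable instance : NormedAddCommGroup (FormDom T₀ hs hp) :=
  (formCore hs hp).toNormedAddCommGroup

noncomputable instance : InnerProductSpace ℝ (FormDom T₀ hs hp) :=
  InnerProductSpace.ofCore _

theorem formInner_eq (u v : FormDom T₀ hs hp) :
    ⟪u, v⟫ = ⟪T₀ (toSub hs hp u), ((toSub hs hp v : T₀.domain) : H)⟫ := rfl

/-- The inclusion of the form domain into `H`, as a continuous linear map. -/
noncomputable def embL : FormDom T₀ hs hp →L[ℝ] H :=
  LinearMap.mkContinuous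
    { toFun := fun u => ((toSub hs hp u : T₀.domain) : H)
      map_add' := fun _ _ => rfl
      map_smul' := fun _ _ => rfl }
    1 (fun u => by
      have h1 : ‖((toSub hs hp u : T₀.domain) : H)‖ ^ 2 ≤ ‖u‖ ^ 2 := by
        rw [← real_inner_self_eq_norm_sq u, formInner_eq]
        exact hp (toSub hs hp u)
      have := le_of_pow_le_pow_left₀ two_ne_zero (norm_nonneg u) h1
      rw [one_mul]
      exact this)

theorem embL_apply (u : FormDom T₀ hs hp) :
    embL hs hp u = ((toSub hs hp u : T₀.domain) : H) := rfl

/-- The continuous extension of the inclusion to the completion. -/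
noncomputable def jmap : Completion (FormDom T₀ hs hp) →L[ℝ] H :=
  (embL hs hp).extend (Completion.toComplL : FormDom T₀ hs hp →L[ℝ] Completion (FormDom T₀ hs hp))

theorem jmap_coe (u : FormDom T₀ hs hp) :
    jmap hs hp (u : Completion (FormDom T₀ hs hp)) = ((toSub hs hp u : T₀.domain) : H) := by
  have := ContinuousLinearMap.extend_eq (embL hs hp)
    (e := (Completion.toComplL : FormDom T₀ hs hp →L[ℝ] Completion (FormDom T₀ hs hp)))
    Completion.denseRange_coe (Completion.isUniformInducing_coe _) u
  simpa [jmap, embL_apply] using this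

/-- Key identity: the `V`-inner product against an element of the original domain can be
computed in `H`. -/
theorem inner_coe_eq (w : Completion (FormDom T₀ hs hp)) (u : FormDom T₀ hs hp) :
    ⟪w, (u : Completion (FormDom T₀ hs hp))⟫ = ⟪jmap hs hp w, T₀ (toSub hs hp u)⟫ := by
  refine Completion.denseRange_coe.induction_on w ?_ ?_
  · exact isClosed_eq (continuous_id.inner continuous_const)
      (((jmap hs hp).continuous).inner continuous_const)
  · intro v
    rw [Completion.inner_coe, jmap_coe, formInner_eq]
    rw [hs (toSub hs hp v) (toSub hs hp u), real_inner_comm]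

theorem jmap_injective (w : Completion (FormDom T₀ hs hp)) (hw : jmap hs hp w = 0) :
    w = 0 := by
  have h1 : ∀ x : Completion (FormDom T₀ hs hp), ⟪w, x⟫ = (0 : ℝ) := by
    intro x
    refine Completion.denseRange_coe.induction_on x ?_ ?_
    · exact isClosed_eq (continuous_const.inner continuous_id) continuous_const
    · intro u
      rw [inner_coe_eq, hw, inner_zero_left]
  have := h1 w
  rwa [inner_self_eq_zero] at this

/-- The "inverse-candidate" map `H → V` via the Riesz representation. -/
noncomputable def gfun (f : H) : Completion (FormDom T₀ hs hp) :=
  (InnerProductSpace.toDual ℝ _).symm ((innerSL ℝ f).comp (jmap hs hp))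

theorem gfun_inner (f : H) (w : Completion (FormDom T₀ hs hp)) :
    ⟪gfun hs hp f, w⟫ = ⟪f, jmap hs hp w⟫ := by
  rw [gfun, InnerProductSpace.toDual_symm_apply]
  rfl

theorem ext_right {x y : Completion (FormDom T₀ hs hp)}
    (h : ∀ w, ⟪x, w⟫ = ⟪y, w⟫) : x = y :=
  ext_inner_left ℝ fun v => by rw [real_inner_comm, h, real_inner_comm]

/-- The bounded self-adjoint "inverse" operator `A = j ∘ G : H → H`. -/
noncomputable def amap : H →ₗ[ℝ] H where
  toFun f := jmap hs hp (gfun hs hp f)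
  map_add' f g := by
    show jmap hs hp (gfun hs hp (f + g)) = jmap hs hp (gfun hs hp f) + jmap hs hp (gfun hs hp g)
    have : gfun hs hp (f + g) = gfun hs hp f + gfun hs hp g := by
      refine ext_right hs hp fun w => ?_
      rw [gfun_inner, inner_add_left, inner_add_left, gfun_inner, gfun_inner]
    rw [this, map_add]
  map_smul' r f := by
    show jmap hs hp (gfun hs hp (r • f)) = r • jmap hs hp (gfun hs hp f)
    have : gfun hs hp (r • f) = r • gfun hs hp f := by
      refine ext_right hs hp fun w => ?_
      rw [gfun_inner, real_inner_smul_left, real_inner_smul_left, gfun_inner]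
    rw [this, map_smul]

theorem amap_apply (f : H) : amap hs hp f = jmap hs hp (gfun hs hp f) := rfl

theorem inner_amap (f g : H) : ⟪g, amap hs hp f⟫ = ⟪gfun hs hp g, gfun hs hp f⟫ := by
  rw [amap_apply, ← gfun_inner]

theorem amap_symm (f g : H) : ⟪amap hs hp f, g⟫ = ⟪f, amap hs hp g⟫ := by
  rw [real_inner_comm, inner_amap, inner_amap, real_inner_comm (gfun hs hp f)]

theorem amap_key (u : T₀.domain) : amap hs hp (T₀ u) = (u : H) := by
  have hg : gfun hs hp (T₀ u) = ((ofSub hs hp u : FormDom T₀ hs hp) :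
      Completion (FormDom T₀ hs hp)) := by
    refine ext_right hs hp fun w => ?_
    have h2 := inner_coe_eq hs hp w (ofSub hs hp u)
    rw [toSub_ofSub] at h2
    rw [gfun_inner, real_inner_comm, ← h2, real_inner_comm]
  rw [amap_apply, hg, jmap_coe]
  rfl

theorem eq_zero_of_gfun_eq_zero (hd : Dense (T₀.domain : Set H)) (f : H)
    (hg : gfun hs hp f = 0) : f = 0 := by
  have hzero : ∀ x ∈ (T₀.domain : Set H), (fun x => (⟪f, x⟫ : ℝ)) x = (fun _ => (0 : ℝ)) x := by
    intro x hx
    have h3 := gfun_inner hs hp f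
      (((ofSub hs hp ⟨x, hx⟩) : FormDom T₀ hs hp) : Completion (FormDom T₀ hs hp))
    rw [hg, inner_zero_left, jmap_coe, toSub_ofSub] at h3
    simpa using h3.symm
  have hfun : (fun x => (⟪f, x⟫ : ℝ)) = fun _ => (0 : ℝ) :=
    Continuous.ext_on hd (continuous_const.inner continuous_id) continuous_const hzero
  have hff := congrFun hfun f
  simpa [inner_self_eq_zero] using hff

theorem gfun_eq_zero_of_inner_amap (f : H) (h : ⟪f, amap hs hp f⟫ = (0 : ℝ)) :
    gfun hs hp f = 0 := by
  have : ⟪gfun hs hp f, gfun hs hp f⟫ = (0 : ℝ) := by rw [← inner_amap, h]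
  exact inner_self_eq_zero.mp this

theorem amap_injective (hd : Dense (T₀.domain : Set H)) :
    Function.Injective (amap hs hp) := by
  rw [injective_iff_map_eq_zero]
  intro f hf
  refine eq_zero_of_gfun_eq_zero hs hp hd f (gfun_eq_zero_of_inner_amap hs hp f ?_)
  rw [hf, inner_zero_right]

theorem amap_denseRange (hd : Dense (T₀.domain : Set H)) :
    Dense ((LinearMap.range (amap hs hp) : Submodule ℝ H) : Set H) := by
  rw [Submodule.dense_iff_topologicalClosure_eq_top,
    Submodule.topologicalClosure_eq_top_iff, Submodule.eq_bot_iff]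
  intro g hgmem
  have h0 : ⟪amap hs hp g, g⟫ = (0 : ℝ) :=
    (Submodule.mem_orthogonal _ g).mp hgmem (amap hs hp g) ⟨g, rfl⟩
  refine eq_zero_of_gfun_eq_zero hs hp hd g (gfun_eq_zero_of_inner_amap hs hp g ?_)
  rw [real_inner_comm, h0]

end FriedrichsAux

/-- Friedrichs extension: for a densely defined, symmetric, positive-definite operator
`T₀ : D(T₀) ⊆ H → H` (`⟨T₀u, u⟩ ≥ ‖u‖²` on `D(T₀)`) on a real Hilbert space `H`, there exists
a self-adjoint extension `S` of `T₀` which is a bijection of `D(S)` onto `H`. -/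
theorem friedrichs_extension_exists
    {H : Type*} [NormedAddCommGroup H] [InnerProductSpace ℝ H] [CompleteSpace H]
    (T₀ : H →ₗ.[ℝ] H)
    (hdense : Dense (T₀.domain : Set H))
    (hsymm : ∀ u v : T₀.domain, ⟪T₀ u, (v : H)⟫ = ⟪(u : H), T₀ v⟫)
    (hpos : ∀ u : T₀.domain, ‖(u : H)‖ ^ 2 ≤ ⟪T₀ u, (u : H)⟫) :
    ∃ S : H →ₗ.[ℝ] H, T₀ ≤ S ∧ S.adjoint = S ∧
      Function.Bijective (fun u : S.domain => S u) := by
  classical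
  set A : H →ₗ[ℝ] H := FriedrichsAux.amap hsymm hpos with hA
  have hinj : Function.Injective A := FriedrichsAux.amap_injective hsymm hpos hdense
  set e : H ≃ₗ[ℝ] LinearMap.range A := LinearEquiv.ofInjective A hinj with he
  set S : H →ₗ.[ℝ] H := ⟨LinearMap.range A, e.symm.toLinearMap⟩ with hS
  have hSdom : S.domain = LinearMap.range A := rfl
  have Sapp : ∀ (f : H) (hf : A f ∈ LinearMap.range A), S ⟨A f, hf⟩ = f := by
    intro f hf
    show e.symm ⟨A f, hf⟩ = f
    rw [LinearEquiv.symm_apply_eq]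
    exact Subtype.ext (LinearEquiv.ofInjective_apply A (h := hinj) f).symm
  have hkey : ∀ u : T₀.domain, A (T₀ u) = (u : H) := FriedrichsAux.amap_key hsymm hpos
  have hdomle : T₀.domain ≤ S.domain := by
    intro x hx
    exact ⟨T₀ ⟨x, hx⟩, hkey ⟨x, hx⟩⟩
  have hTS : T₀ ≤ S := by
    refine ⟨hdomle, ?_⟩
    intro x y hxy
    have hy : y = ⟨A (T₀ x), ⟨T₀ x, rfl⟩⟩ := by
      refine Subtype.ext ?_
      rw [← hxy]
      exact (hkey x).symm
    rw [hy]
    exact (Sapp _ _).symm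
  have hdS : Dense (S.domain : Set H) := FriedrichsAux.amap_denseRange hsymm hpos hdense
  -- symmetry of S
  have hsymS : ∀ x y : S.domain, ⟪S x, (y : H)⟫ = ⟪(x : H), S y⟫ := by
    intro x y
    obtain ⟨f, hf⟩ := x.2
    obtain ⟨g, hg⟩ := y.2
    have hx' : x = ⟨A f, ⟨f, rfl⟩⟩ := Subtype.ext hf.symm
    have hy' : y = ⟨A g, ⟨g, rfl⟩⟩ := Subtype.ext hg.symm
    rw [hx', hy']
    erw [Sapp, Sapp]
    simp only []
    rw [← FriedrichsAux.amap_symm hsymm hpos f g]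
  have hformal : S.IsFormalAdjoint S := hsymS
  have h1 : S ≤ S.adjoint := LinearPMap.IsFormalAdjoint.le_adjoint hdS hformal
  have h2 : S.adjoint ≤ S := by
    have hadj := LinearPMap.adjoint_isFormalAdjoint hdS
    have hmem : ∀ y : S.adjoint.domain, A (S.adjoint y) = (y : H) := by
      intro y
      refine ext_inner_right ℝ fun f => ?_
      have hAf : A f ∈ LinearMap.range A := ⟨f, rfl⟩
      have := hadj y ⟨A f, hAf⟩
      rw [Sapp] at this
      calc ⟪A (S.adjoint y), f⟫ = ⟪S.adjoint y, A f⟫ := FriedrichsAux.amap_symm hsymm hpos _ f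
        _ = ⟪(y : H), f⟫ := this
    refine ⟨?_, ?_⟩
    · intro x hx
      exact ⟨S.adjoint ⟨x, hx⟩, hmem ⟨x, hx⟩⟩
    · intro x y hxy
      have hy : y = ⟨A (S.adjoint x), ⟨S.adjoint x, rfl⟩⟩ := by
        refine Subtype.ext ?_
        rw [← hxy]
        exact (hmem x).symm
      rw [hy]
      exact (Sapp _ _).symm
  refine ⟨S, hTS, le_antisymm h2 h1, ?_⟩
  show Function.Bijective (fun u : S.domain => e.symm u)
  exact e.symm.bijective
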